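/- Fix an integer q ≥ 2, finite types E and U, a ZMod q-linear map δ¹ : (E → ZMod q) → (U → ZMod q), a real β ≥ 0, and p = 1 - e^{-β}. Define K̃(f,S) = ∏_{x ∈ U} ((1-p)·1[x ∉ S] + p·1[x ∈ S]·1[δ¹ f x = 0]). Then for every finset S ⊆ U, Σ_{f : E → ZMod q} K̃(f,S) = p^{|S|}(1-p)^{|U|-|S|} · Nat.card {f : E → ZMod q | ∀ x ∈ S, δ¹ f x = 0}. In particular, the marginal on S of the normalized coupling is the plaquette random-cluster measure with parameters p and q. -/
import Mathlib


/-- Marginal on plaquette sets of the unnormalized Edwards–Sokal coupling: for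
every `S ⊆ U`,
`Σ_f K̃(f,S) = p^{|S|}(1-p)^{|U|-|S|} · #{f | ∀ x ∈ S, δ¹ f x = 0}`,
i.e. the marginal on `S` is the plaquette random-cluster measure. -/
theorem edwards_sokal_marginal_on_plaquettes
    (q : ℕ) (hq : 2 ≤ q) [NeZero q] (E U : Type*)
    [DecidableEq E] [Fintype E] [Fintype U] [DecidableEq U]
    (δ1 : (E → ZMod q) →ₗ[ZMod q] (U → ZMod q))
    (β : ℝ) (hβ : 0 ≤ β) (p : ℝ) (hp : p = 1 - Real.exp (-β))
    (K : (E → ZMod q) → Finset U → ℝ)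
    (hK : ∀ f S, K f S = ∏ x : U,
      ((1 - p) * (if x ∉ S then 1 else 0) +
        p * (if x ∈ S then 1 else 0) * (if δ1 f x = 0 then 1 else 0)))
    (S : Finset U) :
    ∑ f : E → ZMod q, K f S
      = p ^ S.card * (1 - p) ^ (Fintype.card U - S.card) *
          (Nat.card {f : E → ZMod q // ∀ x ∈ S, δ1 f x = 0} : ℝ) := by
  have key : ∀ f : E → ZMod q, K f S =
      p ^ S.card * (1 - p) ^ (Fintype.card U - S.card) *
        (if ∀ x ∈ S, δ1 f x = 0 then (1 : ℝ) else 0) := by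
    intro f
    rw [hK]
    rw [← Finset.prod_mul_prod_compl S]
    have h1 : ∀ x ∈ S, ((1 - p) * (if x ∉ S then (1:ℝ) else 0) +
        p * (if x ∈ S then 1 else 0) * (if δ1 f x = 0 then 1 else 0))
        = p * (if δ1 f x = 0 then 1 else 0) := by
      intro x hx; simp [hx]
    have h2 : ∀ x ∈ Sᶜ, ((1 - p) * (if x ∉ S then (1:ℝ) else 0) +
        p * (if x ∈ S then 1 else 0) * (if δ1 f x = 0 then 1 else 0))
        = (1 - p) := by
      intro x hx
      simp only [Finset.mem_compl] at hx
      simp [hx]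
    rw [Finset.prod_congr rfl h1, Finset.prod_congr rfl h2,
      Finset.prod_mul_distrib, Finset.prod_const, Finset.prod_const,
      Finset.card_compl, Finset.prod_boole]
    ring
  rw [Finset.sum_congr rfl (fun f _ => key f), ← Finset.mul_sum,
    Finset.sum_boole]
  congr 1
  rw [Nat.card_eq_fintype_card, Fintype.card_subtype]
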